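/- With the hypotheses of the tower lemma (towers {A_r}, principal ideals I_r, finite free A_r-modules M_r with Δ-action, M_r/I_rM_r free of rank d over (A_r/I_r)[Δ/Δ_r], and surjective reduced transition maps M_r/I_rM_r → (M_s/I_sM_s) ⊗ (A_r/I_r) for s ≤ r), the transition maps induce isomorphisms M_r ⊗_{A_r[Δ/Δ_r]} A_r[Δ/Δ_s] ≅ M_s ⊗_{A_s} A_r of A_r[Δ/Δ_s]-modules for all r ≥ s. -/

import Mathlib

open Submodule Function Pointwise

private theorem nak_top' {R M : Type*} [CommRing R] [AddCommGroup M] [Module R M]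
    [Module.Finite R M] {I : Ideal R} (hI : I ≤ Ideal.jacobson ⊥) {W : Submodule R M}
    (h : (⊤ : Submodule R M) ≤ W ⊔ I • ⊤) : W = ⊤ :=
  top_le_iff.mp (Submodule.le_of_le_smul_of_le_jacobson_bot Module.Finite.fg_top hI h)

private theorem stmt11_aux {A R S : Type*} [CommRing A] [IsLocalRing A] [CommRing R] [CommRing S]
    [Algebra A R] [Algebra A S] (π : R →+* S)
    (hπalg : ∀ a : A, π (algebraMap A R a) = algebraMap A S a)
    {fA : A} (hfA : ¬ IsUnit fA)
    {Mr : Type*} [AddCommGroup Mr] [Module A Mr] [Module R Mr] [IsScalarTower A R Mr]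
    [Module.Finite A Mr]
    {N : Type*} [AddCommGroup N] [Module A N] [Module S N] [IsScalarTower A S N]
    [Module.Finite A N]
    {d : ℕ}
    (b : Module.Basis (Fin d) (R ⧸ (Ideal.span {fA}).map (algebraMap A R))
      (Mr ⧸ ((Ideal.span {fA}).map (algebraMap A R) • (⊤ : Submodule R Mr))))
    (e : Module.Basis (Fin d) S N)
    (φ : Mr →ₛₗ[π] N)
    (hredsurj : ∀ y : N, ∃ m : Mr, y - φ m ∈ (Ideal.span {fA} • (⊤ : Submodule A N))) :
    Function.Surjective φ ∧
      LinearMap.ker φ = (RingHom.ker π) • (⊤ : Submodule R Mr) := by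
  classical
  -- φ is A-linear
  have hφA : ∀ (a : A) (m : Mr), φ (a • m) = a • φ m := by
    intro a m
    rw [← algebraMap_smul R a m, LinearMap.map_smulₛₗ, hπalg, algebraMap_smul]
  -- jacobson
  have hjac : Ideal.span {fA} ≤ Ideal.jacobson ⊥ := by
    rw [IsLocalRing.jacobson_eq_maximalIdeal ⊥ bot_ne_top]
    exact (Ideal.span_singleton_le_iff_mem _).mpr hfA
  -- the A-linearization of φ
  set ψ : Mr →ₗ[A] N :=
    { toFun := φ, map_add' := fun x y => map_add φ x y, map_smul' := hφA } with hψdef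
  -- Step 1 : surjectivity
  have hrange : LinearMap.range ψ = ⊤ := by
    apply nak_top' hjac
    intro y _
    obtain ⟨m, hm⟩ := hredsurj y
    have hy : y = ψ m + (y - φ m) := by
      show y = φ m + (y - φ m); abel
    rw [hy]
    exact Submodule.add_mem_sup (LinearMap.mem_range_self ψ m) hm
  have hsurj : Function.Surjective φ := fun y => LinearMap.range_eq_top.mp hrange y
  refine ⟨hsurj, ?_⟩
  -- Step 2 : reduction data
  set F : Ideal R := (Ideal.span {fA}).map (algebraMap A R) with hF
  set P' : Submodule R Mr := F • ⊤ with hP'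
  choose w hw using fun j => Submodule.Quotient.mk_surjective P' (b j)
  -- P' is contained in fA • Mr over A
  have hP'le : ∀ x ∈ P', x ∈ (Ideal.span {fA} • (⊤ : Submodule A Mr)) := by
    intro x hx
    have hFeq : F = Ideal.span {algebraMap A R fA} := by
      rw [hF, Ideal.map_span]; simp
    rw [hP', hFeq, Submodule.ideal_span_singleton_smul] at hx
    rw [Submodule.ideal_span_singleton_smul]
    have hx' : x ∈ (algebraMap A R fA) • ((⊤ : Submodule R Mr) : Set Mr) := by
      rw [← Submodule.coe_pointwise_smul]; exact hx
    obtain ⟨m, -, hm⟩ := Set.mem_smul_set.mp hx'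
    rw [← hm, algebraMap_smul]
    exact Submodule.smul_mem_pointwise_smul m fA ⊤ trivial
  -- tower instance for the quotient
  haveI : IsScalarTower R (R ⧸ F) (Mr ⧸ P') := by
    constructor
    intro r q x
    obtain ⟨c, rfl⟩ := Ideal.Quotient.mk_surjective q
    obtain ⟨m, rfl⟩ := Submodule.Quotient.mk_surjective P' x
    have h1 : r • (Ideal.Quotient.mk F c) = Ideal.Quotient.mk F (r * c) := rfl
    rw [h1, Module.Quotient.mk_smul_mk, Module.Quotient.mk_smul_mk,
      ← Submodule.Quotient.mk_smul, mul_smul]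
  -- Step 3 : w generates Mr over R
  have hwspan : Submodule.span R (Set.range w) = ⊤ := by
    have hWA : (Submodule.span R (Set.range w)).restrictScalars A = ⊤ := by
      apply nak_top' hjac
      intro x _
      have hxbar : Submodule.Quotient.mk (p := P') x ∈
          Submodule.span (R ⧸ F) (Set.range fun j => Submodule.Quotient.mk (p := P') (w j)) := by
        have hrange : Set.range (fun j => Submodule.Quotient.mk (p := P') (w j))
            = Set.range b := by
          simp only [hw]
        rw [hrange, b.span_eq]; trivial
      rw [← Submodule.restrictScalars_mem R,
        Submodule.restrictScalars_span R (R ⧸ F) Ideal.Quotient.mk_surjective] at hxbar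
      have himg : (Set.range fun j => Submodule.Quotient.mk (p := P') (w j)) =
          P'.mkQ '' Set.range w := by
        rw [← Set.range_comp]; rfl
      rw [himg, ← Submodule.map_span] at hxbar
      obtain ⟨z, hz, hzx⟩ := hxbar
      have hxz : x - z ∈ P' := by
        rw [← Submodule.Quotient.eq]
        exact hzx.symm
      have hxe : x = z + (x - z) := by abel
      rw [hxe]
      exact Submodule.add_mem_sup (by simpa using hz) (hP'le _ hxz)
    rw [eq_top_iff]
    intro x _
    exact (show x ∈ (Submodule.span R (Set.range w)).restrictScalars A from by rw [hWA]; trivial)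
  -- Step 4 : φ ∘ w generates N over S, and is independent
  set β : (Fin d →₀ S) →ₗ[S] N := Finsupp.linearCombination S (fun j => φ (w j)) with hβ
  have hβsurj : Surjective β := by
    rw [← LinearMap.range_eq_top, Finsupp.range_linearCombination, eq_top_iff]
    intro y _
    obtain ⟨x, rfl⟩ := hsurj y
    have hx : x ∈ Submodule.span R (Set.range w) := hwspan ▸ trivial
    rw [Finsupp.mem_span_range_iff_exists_finsupp] at hx
    obtain ⟨c, rfl⟩ := hx
    rw [map_finsuppSum]
    refine Submodule.sum_mem _ fun j hj => ?_
    show φ (c j • w j) ∈ _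
    rw [LinearMap.map_smulₛₗ]
    exact Submodule.smul_mem _ _ (Submodule.subset_span ⟨j, rfl⟩)
  have hβinj : Injective β := by
    haveI : Module.Finite S (Fin d →₀ S) :=
      Module.Finite.of_basis (Finsupp.basisSingleOne : Module.Basis (Fin d) S (Fin d →₀ S))
    have hcomp : Injective (e.repr.toLinearMap ∘ₗ β) :=
      OrzechProperty.injective_of_surjective_endomorphism _
        (by exact e.repr.surjective.comp hβsurj)
    exact Injective.of_comp hcomp
  -- Step 5 : kernel computation
  apply le_antisymm
  · intro x hx
    have hxk : φ x = 0 := hx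
    have hxs : x ∈ Submodule.span R (Set.range w) := hwspan ▸ trivial
    rw [Finsupp.mem_span_range_iff_exists_finsupp] at hxs
    obtain ⟨c, hc⟩ := hxs
    have h0 : β (c.mapRange π (map_zero π)) = 0 := by
      rw [hβ, Finsupp.linearCombination_apply, Finsupp.sum_mapRange_index (by simp)]
      rw [← hxk, ← hc, map_finsuppSum]
      exact Finsupp.sum_congr fun j _ => (LinearMap.map_smulₛₗ φ (c j) (w j)).symm
    have hc0 : c.mapRange π (map_zero π) = 0 := hβinj (by rw [h0, map_zero])
    rw [← hc]
    refine Submodule.sum_mem _ fun j hj => ?_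
    have hcj : π (c j) = 0 := by
      have := DFunLike.congr_fun hc0 j
      simpa [Finsupp.mapRange_apply] using this
    exact Submodule.smul_mem_smul hcj trivial
  · rw [Submodule.smul_le]
    intro r hr m _
    rw [LinearMap.mem_ker, LinearMap.map_smulₛₗ, hr, zero_smul]



/-- **tower lemma, control isomorphism.** With the hypotheses of the tower
lemma — local rings `B → A` (levels `s ≤ r`) with proper principal ideals `(f_B)`, `(f_A)`
compatible under the transition map, `A` separated, a finite free `A`-module `Mr` with an
action of `Δ` through the finite quotient `Δ/Δr` whose reduction `Mr/f_A·Mr` is free of rank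
`d` over `(A/f_A)[Δ/Δr]`, a module `N` (playing the role of `M_s ⊗_{A_s} A_r`, free of rank `d`
over `A[Δ/Δs]`), and a `Δ`-equivariant `A`-linear transition map `φ : Mr → N` (semilinear over
the projection `A[Δ/Δr] → A[Δ/Δs]`) which is surjective modulo `f_A` — the transition map
induces an isomorphism `Mr ⊗_{A[Δ/Δr]} A[Δ/Δs] ≅ N`; equivalently, `φ` is surjective with
kernel `ker(A[Δ/Δr] → A[Δ/Δs])·Mr`. -/
theorem stmt_11
    (B A : Type*) [CommRing B] [CommRing A] [IsLocalRing B] [IsLocalRing A]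
    (g : B →+* A) [IsLocalHom g]
    (fB : B) (fA : A) (hfB : ¬ IsUnit fB) (hfA : ¬ IsUnit fA)
    (hcomp : g fB ∈ Ideal.span {fA})
    (hsep : (⨅ n : ℕ, Ideal.span {fA} ^ n) = (⊥ : Ideal A))
    (Δ : Type*) [CommGroup Δ] (Δr Δs : Subgroup Δ) [Δr.Normal] [Δs.Normal]
    [Finite (Δ ⧸ Δr)] [Finite (Δ ⧸ Δs)]
    (hrs : Δr ≤ Δs.comap (MonoidHom.id Δ))
    (Mr : Type*) [AddCommGroup Mr] [Module A Mr] [Module (MonoidAlgebra A (Δ ⧸ Δr)) Mr]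
    [IsScalarTower A (MonoidAlgebra A (Δ ⧸ Δr)) Mr] [Module.Finite A Mr] [Module.Free A Mr]
    (d : ℕ)
    (hredfree : Nonempty (Module.Basis (Fin d)
        ((MonoidAlgebra A (Δ ⧸ Δr)) ⧸
          (Ideal.span {fA}).map (algebraMap A (MonoidAlgebra A (Δ ⧸ Δr))))
        (Mr ⧸ ((Ideal.span {fA}).map (algebraMap A (MonoidAlgebra A (Δ ⧸ Δr))) •
          (⊤ : Submodule (MonoidAlgebra A (Δ ⧸ Δr)) Mr)))))
    (N : Type*) [AddCommGroup N] [Module A N] [Module (MonoidAlgebra A (Δ ⧸ Δs)) N]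
    [IsScalarTower A (MonoidAlgebra A (Δ ⧸ Δs)) N]
    (hNfree : Nonempty (Module.Basis (Fin d) (MonoidAlgebra A (Δ ⧸ Δs)) N))
    (φ : Mr →ₛₗ[MonoidAlgebra.mapDomainRingHom A
        (QuotientGroup.map Δr Δs (MonoidHom.id Δ) hrs)] N)
    (hredsurj : ∀ y : N, ∃ m : Mr, y - φ m ∈ (Ideal.span {fA} • (⊤ : Submodule A N))) :
    Function.Surjective φ ∧
      LinearMap.ker φ = (RingHom.ker (MonoidAlgebra.mapDomainRingHom A
        (QuotientGroup.map Δr Δs (MonoidHom.id Δ) hrs))) •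
          (⊤ : Submodule (MonoidAlgebra A (Δ ⧸ Δr)) Mr) := by
  obtain ⟨b⟩ := hredfree
  obtain ⟨e⟩ := hNfree
  haveI : Module.Finite A (MonoidAlgebra A (Δ ⧸ Δs)) :=
    Module.Finite.of_basis (MonoidAlgebra.basis (Δ ⧸ Δs) A)
  haveI : Module.Finite (MonoidAlgebra A (Δ ⧸ Δs)) N := Module.Finite.of_basis e
  haveI : Module.Finite A N := Module.Finite.trans (MonoidAlgebra A (Δ ⧸ Δs)) N
  exact stmt11_aux (MonoidAlgebra.mapDomainRingHom A
      (QuotientGroup.map Δr Δs (MonoidHom.id Δ) hrs))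
    (fun a => MonoidAlgebra.mapDomain_algebraMap A _ a) hfA b e φ hredsurj
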